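/- An lfp category A is strictly lfp if and only if for every morphism b : B → A with B finitely presentable there exist a finitely presentable object B' and morphisms b' : B' → A and f : A → B' such that b' ∘ f ∘ b = b. -/

import Mathlib

open CategoryTheory Limits Opposite Function

universe w v u

/-- An object is finitely presentable if its hom-functor preserves filtered colimits. -/
def IsFinitelyPresentable {C : Type u} [Category.{v} C] (A : C) : Prop :=
  ∀ (J : Type v) [SmallCategory J] [IsFiltered J] (Dg : J ⥤ C) (cc : Cocone Dg),
    Nonempty (IsColimit cc) → Nonempty (IsColimit ((coyoneda.obj (op A)).mapCocone cc))

/-- A diagram of monomorphisms. -/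
def MonoDiagram {C : Type u} [Category.{v} C] {J : Type*} [Category J] (Dg : J ⥤ C) : Prop :=
  ∀ ⦃i j : J⦄ (f : i ⟶ j), Mono (Dg.map f)

/-- An object is finitely generated if its hom-functor preserves filtered colimits of
monomorphisms. -/
def IsFinitelyGenerated {C : Type u} [Category.{v} C] (A : C) : Prop :=
  ∀ (J : Type v) [SmallCategory J] [IsFiltered J] (Dg : J ⥤ C), MonoDiagram Dg →
    ∀ (cc : Cocone Dg),
      Nonempty (IsColimit cc) → Nonempty (IsColimit ((coyoneda.obj (op A)).mapCocone cc))

/-- A locally finitely presentable category: cocomplete, with a small family representing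
all finitely presentable objects, such that every object is a filtered colimit of
finitely presentable objects. -/
def IsLFP (C : Type u) [Category.{v} C] : Prop :=
  HasColimits C ∧
  (∃ (ι : Type v) (G : ι → C), (∀ i, _root_.IsFinitelyPresentable (G i)) ∧
    ∀ X : C, _root_.IsFinitelyPresentable X → ∃ i, Nonempty (X ≅ G i)) ∧
  ∀ X : C, ∃ (J : Type v) (_ : SmallCategory J) (_ : IsFiltered J) (Dg : J ⥤ C)
    (cc : Cocone Dg), (∀ j, _root_.IsFinitelyPresentable (Dg.obj j)) ∧ Nonempty (IsColimit cc) ∧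
    Nonempty (cc.pt ≅ X)

/-- A functor is finitary if it preserves filtered colimits. -/
def IsFinitary {C : Type u} [Category.{v} C] {B : Type w} [Category.{v} B] (F : C ⥤ B) : Prop :=
  ∀ (J : Type v) [SmallCategory J] [IsFiltered J] (Dg : J ⥤ C) (cc : Cocone Dg),
    Nonempty (IsColimit cc) → Nonempty (IsColimit (F.mapCocone cc))

/-- A functor preserves filtered colimits of monomorphisms. -/
def PreservesFilteredColimitsOfMonos {C : Type u} [Category.{v} C] {B : Type w} [Category.{v} B]
    (F : C ⥤ B) : Prop :=
  ∀ (J : Type v) [SmallCategory J] [IsFiltered J] (Dg : J ⥤ C), MonoDiagram Dg →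
    ∀ (cc : Cocone Dg), Nonempty (IsColimit cc) → Nonempty (IsColimit (F.mapCocone cc))

/-- A functor is finitely bounded if every finitely generated subobject of `F.obj A`
factorizes through the `F`-image of a finitely generated subobject of `A`. -/
def FinitelyBounded {C : Type u} [Category.{v} C] {B : Type w} [Category.{v} B]
    (F : C ⥤ B) : Prop :=
  ∀ (A : C) (M₀ : B) (m₀ : M₀ ⟶ F.obj A), Mono m₀ → IsFinitelyGenerated M₀ →
    ∃ (M : C) (m : M ⟶ A), Mono m ∧ IsFinitelyGenerated M ∧
      ∃ g : M₀ ⟶ F.obj M, g ≫ F.map m = m₀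

/-- A morphism is finitary if it factorizes through a finitely presentable object. -/
def FinitaryMorphism {C : Type u} [Category.{v} C] {X Y : C} (u : X ⟶ Y) : Prop :=
  ∃ (Z : C) (v : X ⟶ Z) (w : Z ⟶ Y), _root_.IsFinitelyPresentable Z ∧ v ≫ w = u

/-- A strictly locally finitely presentable category: every object has, for each
finitely generated subobject, a finitary endomorphism fixing that subobject. -/
def StrictlyLFP (C : Type u) [Category.{v} C] : Prop :=
  IsLFP C ∧
  ∀ (A M : C) (m : M ⟶ A), Mono m → IsFinitelyGenerated M →
    ∃ u : A ⟶ A, FinitaryMorphism u ∧ m ≫ u = m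

namespace Stmt10Aux

variable {C : Type u} [Category.{v} C]

/-- Test equality of parallel morphisms against maps from finitely presentable objects. -/
lemma fp_test (hC : IsLFP C) {X Y : C} {t t' : X ⟶ Y}
    (h : ∀ (T : C), _root_.IsFinitelyPresentable T → ∀ g : T ⟶ X, g ≫ t = g ≫ t') : t = t' := by
  obtain ⟨J, _, _, D, cc, hfp, ⟨hcl⟩, ⟨iso⟩⟩ := hC.2.2 X
  have key : iso.hom ≫ t = iso.hom ≫ t' := by
    apply hcl.hom_ext
    intro j
    have := h _ (hfp j) (cc.ι.app j ≫ iso.hom)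
    simpa using this
  calc t = iso.inv ≫ (iso.hom ≫ t) := by simp
  _ = iso.inv ≫ (iso.hom ≫ t') := by rw [key]
  _ = t' := by simp

/-- Legs of filtered colimits of monomorphisms are monomorphisms (cancellation form). -/
lemma leg_cancel (hC : IsLFP C) {J : Type v} [SmallCategory J] [IsFiltered J]
    {E : J ⥤ C} (hE : MonoDiagram E) {cc : Cocone E} (hcc : IsColimit cc) (k : J)
    {T : C} (x y : T ⟶ E.obj k) (hxy : x ≫ cc.ι.app k = y ≫ cc.ι.app k) : x = y := by
  haveI := hC.1
  have key : ∀ (T' : C), _root_.IsFinitelyPresentable T' → ∀ (x y : T' ⟶ E.obj k),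
      x ≫ cc.ι.app k = y ≫ cc.ι.app k → x = y := by
    intro T' hT' x y hxy
    have hmap : IsColimit ((coyoneda.obj (op T')).mapCocone cc) := (hT' J E cc ⟨hcc⟩).some
    have heq : ((coyoneda.obj (op T')).mapCocone cc).ι.app k x
        = ((coyoneda.obj (op T')).mapCocone cc).ι.app k y := hxy
    rw [Types.FilteredColimit.isColimit_eq_iff (E ⋙ coyoneda.obj (op T')) hmap] at heq
    obtain ⟨l, f, g, hfg⟩ := heq
    have hfg' : x ≫ E.map f = y ≫ E.map g := hfg
    have hcond := IsFiltered.coeq_condition f g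
    have heq2 : x ≫ E.map (f ≫ IsFiltered.coeqHom f g)
        = y ≫ E.map (f ≫ IsFiltered.coeqHom f g) := by
      calc x ≫ E.map (f ≫ IsFiltered.coeqHom f g)
          = (x ≫ E.map f) ≫ E.map (IsFiltered.coeqHom f g) := by
            rw [E.map_comp, Category.assoc]
        _ = (y ≫ E.map g) ≫ E.map (IsFiltered.coeqHom f g) := by rw [hfg']
        _ = y ≫ E.map (g ≫ IsFiltered.coeqHom f g) := by rw [E.map_comp, Category.assoc]
        _ = y ≫ E.map (f ≫ IsFiltered.coeqHom f g) := by rw [← hcond]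
    haveI := hE (f ≫ IsFiltered.coeqHom f g)
    exact (cancel_mono _).mp heq2
  apply fp_test hC
  intro T' hT' g
  apply key T' hT'
  rw [Category.assoc, Category.assoc, hxy]


/-- Data for one step of the image construction. -/
structure StepData {A : C} (Q : C) (m : Q ⟶ A) where
  Q' : C
  e : Q ⟶ Q'
  m' : Q' ⟶ A
  fac : e ≫ m' = m
  epi : Epi e
  llp : ∀ {U V : C} (n : U ⟶ V), Mono n → ∀ (c : Q ⟶ U) (h : Q' ⟶ V),
      e ≫ h = c ≫ n → ∃ d : Q' ⟶ U, e ≫ d = c ∧ d ≫ n = h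
  new : ∀ (T : C), _root_.IsFinitelyPresentable T → ∀ u v : T ⟶ Q, u ≫ m = v ≫ m → u ≫ e = v ≫ e

lemma step (hC : IsLFP C) {A Q : C} (m : Q ⟶ A) : Nonempty (StepData Q m) := by
  haveI := hC.1
  obtain ⟨ι, G, hGfp, hGall⟩ := hC.2.1
  let R := Σ i : ι, {p : (G i ⟶ Q) × (G i ⟶ Q) // p.1 ≫ m = p.2 ≫ m}
  let P : C := ∐ (fun r : R => G r.1)
  let U : P ⟶ Q := Sigma.desc (fun r => r.2.1.1)
  let V : P ⟶ Q := Sigma.desc (fun r => r.2.1.2)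
  have hUV : U ≫ m = V ≫ m := by
    apply Sigma.hom_ext
    intro r
    simp only [U, V, colimit.ι_desc_assoc, Cofan.mk_ι_app]
    exact r.2.2
  have hcond : ∀ r : R, r.2.1.1 ≫ coequalizer.π U V = r.2.1.2 ≫ coequalizer.π U V := by
    intro r
    have h1 : Sigma.ι (fun r : R => G r.1) r ≫ U = r.2.1.1 := by simp [U]
    have h2 : Sigma.ι (fun r : R => G r.1) r ≫ V = r.2.1.2 := by simp [V]
    rw [← h1, ← h2, Category.assoc, Category.assoc, coequalizer.condition]
  refine ⟨⟨coequalizer U V, coequalizer.π U V, coequalizer.desc m hUV,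
    coequalizer.π_desc m hUV, inferInstance, ?_, ?_⟩⟩
  · intro U' V' n hn c h hsq
    have hc : U ≫ c = V ≫ c := by
      apply Sigma.hom_ext
      intro r
      haveI := hn
      apply (cancel_mono n).mp
      simp only [Category.assoc, U, V, colimit.ι_desc_assoc, Cofan.mk_ι_app]
      rw [← hsq, ← Category.assoc, ← Category.assoc, hcond r]
    refine ⟨coequalizer.desc c hc, coequalizer.π_desc c hc, ?_⟩
    haveI : Epi (coequalizer.π U V) := inferInstance
    apply (cancel_epi (coequalizer.π U V)).mp
    rw [← Category.assoc, coequalizer.π_desc, hsq]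
  · intro T hT u v huv
    obtain ⟨i, ⟨φ⟩⟩ := hGall T hT
    have hr : (φ.inv ≫ u) ≫ m = (φ.inv ≫ v) ≫ m := by
      rw [Category.assoc, Category.assoc, huv]
    have := hcond ⟨i, ⟨(φ.inv ≫ u, φ.inv ≫ v), hr⟩⟩
    simp only [Category.assoc] at this
    calc u ≫ coequalizer.π U V = φ.hom ≫ φ.inv ≫ u ≫ coequalizer.π U V := by simp
    _ = φ.hom ≫ φ.inv ≫ v ≫ coequalizer.π U V := by rw [this]
    _ = v ≫ coequalizer.π U V := by simp


/-- A `Type v` copy of the natural numbers, used as a filtered index category. -/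
def NN : Type v := ULift.{v} ℕ

/-- Constructor for `NN`. -/
def NN.mk (n : ℕ) : NN.{v} := ULift.up n

/-- Projection from `NN`. -/
def NN.down (a : NN.{v}) : ℕ := ULift.down a

instance : Preorder NN.{v} := Preorder.lift NN.down

instance : Nonempty NN.{v} := ⟨NN.mk 0⟩

instance : IsDirected NN.{v} (· ≤ ·) :=
  ⟨fun a b => ⟨NN.mk (max a.down b.down), le_max_left a.down b.down, le_max_right a.down b.down⟩⟩

lemma NN.down_monotone : Monotone (NN.down.{v}) := fun _ _ h => h

variable (hC : IsLFP C)
include hC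

/-- The tower of iterated coequalizer quotients under `b : B ⟶ A`. -/
noncomputable def chain {A B : C} (b : B ⟶ A) : ℕ → Σ Q : C, (Q ⟶ A) :=
  fun n => Nat.rec ⟨B, b⟩ (fun _ p => ⟨(step hC p.2).some.Q', (step hC p.2).some.m'⟩) n

/-- The step data at stage `n` of the tower. -/
noncomputable def stepAt {A B : C} (b : B ⟶ A) (n : ℕ) :
    StepData (chain hC b n).1 (chain hC b n).2 :=
  (step hC (chain hC b n).2).some

lemma chain_zero {A B : C} (b : B ⟶ A) : chain hC b 0 = ⟨B, b⟩ := rfl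

lemma chain_succ_fst {A B : C} (b : B ⟶ A) (n : ℕ) :
    (chain hC b (n + 1)).1 = (stepAt hC b n).Q' := rfl

lemma chain_succ_snd {A B : C} (b : B ⟶ A) (n : ℕ) :
    (chain hC b (n + 1)).2 = (stepAt hC b n).m' := rfl

/-- The connecting morphism of the tower. -/
noncomputable def chainMap {A B : C} (b : B ⟶ A) (n : ℕ) :
    (chain hC b n).1 ⟶ (chain hC b (n + 1)).1 :=
  (stepAt hC b n).e

/-- The tower as a functor `ℕ ⥤ C`. -/
noncomputable def chainF {A B : C} (b : B ⟶ A) : ℕ ⥤ C :=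
  Functor.ofSequence (chainMap hC b)

@[simp] lemma chainF_obj {A B : C} (b : B ⟶ A) (n : ℕ) :
    (chainF hC b).obj n = (chain hC b n).1 := rfl

lemma chainF_map_succ {A B : C} (b : B ⟶ A) (n : ℕ) :
    (chainF hC b).map (homOfLE (Nat.le_add_right n 1)) = chainMap hC b n :=
  Functor.ofSequence_map_homOfLE_succ _ n

/-- The canonical cocone over the tower with point `A`. -/
noncomputable def chainCocone {A B : C} (b : B ⟶ A) : Cocone (chainF hC b) where
  pt := A
  ι := NatTrans.ofSequence (fun n => (chain hC b n).2) (by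
    intro n
    rw [chainF_map_succ]
    show chainMap hC b n ≫ (stepAt hC b n).m' = (chain hC b n).2 ≫ 𝟙 A
    rw [Category.comp_id]
    exact (stepAt hC b n).fac)

@[simp] lemma chainCocone_ι {A B : C} (b : B ⟶ A) (n : ℕ) :
    (chainCocone hC b).ι.app n = (chain hC b n).2 := rfl


/-- Recursive construction of liftings along the tower. -/
noncomputable def liftFam {A B U V : C} (b : B ⟶ A) (nm : U ⟶ V) (hn : Mono nm)
    (h : ∀ n : ℕ, ((chain hC b n).1 ⟶ V))
    (hcomp : ∀ n, chainMap hC b n ≫ h (n + 1) = h n)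
    (c : B ⟶ U) (hc : h 0 = c ≫ nm) :
    ∀ n : ℕ, {d : (chain hC b n).1 ⟶ U // d ≫ nm = h n} :=
  fun n => Nat.rec ⟨c, hc.symm⟩
    (fun n d =>
      let s := (stepAt hC b n).llp nm hn d.1 (h (n + 1))
        (by rw [d.2]; exact hcomp n)
      ⟨s.choose, s.choose_spec.2⟩) n

/-- The image factorization of a morphism in an lfp category: a factorization
`b = e ≫ mI` with `mI` a monomorphism and `e` an epimorphism having the left lifting
property with respect to all monomorphisms. -/
lemma image_fact {A B : C} (b : B ⟶ A) :
    ∃ (I : C) (e : B ⟶ I) (mI : I ⟶ A),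
      e ≫ mI = b ∧ Epi e ∧
      (∀ {U V : C} (n : U ⟶ V), Mono n → ∀ (c : B ⟶ U) (h : I ⟶ V),
          e ≫ h = c ≫ n → ∃ d : I ⟶ U, e ≫ d = c ∧ d ≫ n = h) ∧
      Mono mI := by
  haveI := hC.1
  let dF : NN.{v} ⥤ ℕ := NN.down_monotone.{v}.functor
  let Fl : NN.{v} ⥤ C := dF ⋙ chainF hC b
  let cw : Cocone Fl := (chainCocone hC b).whisker dF
  let Qω := colimit Fl
  let κ : ∀ n : ℕ, ((chain hC b n).1 ⟶ Qω) := fun n => colimit.ι Fl (NN.mk n)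
  let mω : Qω ⟶ A := colimit.desc Fl cw
  have hκm : ∀ n, κ n ≫ mω = (chain hC b n).2 := fun n => colimit.ι_desc cw (NN.mk n)
  have hpushκ : ∀ {n N : ℕ} (hnN : n ≤ N),
      (chainF hC b).map (homOfLE hnN) ≫ κ N = κ n := by
    intro n N hnN
    have w := colimit.w Fl (homOfLE (show NN.mk n ≤ NN.mk N from hnN))
    have hd : dF.map (homOfLE (show NN.mk n ≤ NN.mk N from hnN)) = homOfLE hnN :=
      Subsingleton.elim _ _
    rw [← hd]
    exact w
  have hκs : ∀ n, κ n = chainMap hC b n ≫ κ (n + 1) := by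
    intro n
    rw [← chainF_map_succ hC b n, ← hpushκ (Nat.le_add_right n 1)]
    rfl
  refine ⟨Qω, κ 0, mω, hκm 0, ?_, ?_, ?_⟩
  · -- Epi (κ 0)
    constructor
    intro Z t t' htt
    apply colimit.hom_ext
    intro j
    have hall : ∀ n : ℕ, κ n ≫ t = κ n ≫ t' := by
      intro n
      induction n with
      | zero => exact htt
      | succ n ih =>
        have hepi : Epi (chainMap hC b n) := (stepAt hC b n).epi
        apply (cancel_epi (chainMap hC b n)).mp
        calc chainMap hC b n ≫ κ (n + 1) ≫ t = κ n ≫ t := by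
              rw [← Category.assoc, ← hκs n]
      _ = κ n ≫ t' := ih
      _ = chainMap hC b n ≫ κ (n + 1) ≫ t' := by rw [← Category.assoc, ← hκs n]
    exact hall (NN.down j)
  · -- left lifting property against monomorphisms
    intro U V nm hn c h hsq
    let hfam : ∀ k : ℕ, ((chain hC b k).1 ⟶ V) := fun k => κ k ≫ h
    have hcomp : ∀ k, chainMap hC b k ≫ hfam (k + 1) = hfam k := by
      intro k
      show chainMap hC b k ≫ κ (k + 1) ≫ h = κ k ≫ h
      rw [← Category.assoc, ← hκs k]
    have hc0 : hfam 0 = c ≫ nm := hsq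
    let dfam := liftFam hC b nm hn hfam hcomp c hc0
    let dcone : Cocone Fl := ⟨U, ⟨fun j => (dfam (NN.down j)).1, by
      intro j j' f
      haveI := hn
      apply (cancel_mono nm).mp
      show (Fl.map f ≫ (dfam (NN.down j')).1) ≫ nm = ((dfam (NN.down j)).1 ≫ 𝟙 U) ≫ nm
      rw [Category.comp_id, (dfam (NN.down j)).2]
      erw [Category.assoc, (dfam (NN.down j')).2]
      show Fl.map f ≫ κ (NN.down j') ≫ h = κ (NN.down j) ≫ h
      have hw : Fl.map f ≫ κ (NN.down j') = κ (NN.down j) := colimit.w Fl f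
      exact (Category.assoc _ _ _).symm.trans (congrArg (· ≫ h) hw)⟩⟩
    refine ⟨colimit.desc Fl dcone, ?_, ?_⟩
    · exact colimit.ι_desc dcone (NN.mk 0)
    · apply colimit.hom_ext
      intro j
      have h1 : colimit.ι Fl j ≫ colimit.desc Fl dcone = (dfam (NN.down j)).1 :=
        colimit.ι_desc dcone j
      rw [← Category.assoc, h1]
      exact (dfam (NN.down j)).2
  · -- Mono mω
    have key : ∀ (T : C), _root_.IsFinitelyPresentable T → ∀ x y : T ⟶ Qω,
        x ≫ mω = y ≫ mω → x = y := by
      intro T hT x y hxy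
      have hmap : IsColimit ((coyoneda.obj (op T)).mapCocone (colimit.cocone Fl)) :=
        (hT NN.{v} Fl (colimit.cocone Fl) ⟨colimit.isColimit Fl⟩).some
      obtain ⟨jx, x', hx⟩ := Types.jointly_surjective _ hmap x
      obtain ⟨jy, y', hy⟩ := Types.jointly_surjective _ hmap y
      have hx' : x' ≫ κ (NN.down jx) = x := hx
      have hy' : y' ≫ κ (NN.down jy) = y := hy
      have hstep : ∀ (k : ℕ) (w z : T ⟶ (chain hC b k).1),
          w ≫ (chain hC b k).2 = z ≫ (chain hC b k).2 → w ≫ κ k = z ≫ κ k := by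
        intro k w z hwz
        have hnew : w ≫ chainMap hC b k = z ≫ chainMap hC b k :=
          (stepAt hC b k).new T hT w z hwz
        rw [hκs k, ← Category.assoc, hnew, Category.assoc]
      have hxN : (x' ≫ (chainF hC b).map (homOfLE (le_max_left (NN.down jx) (NN.down jy))))
          ≫ κ (max (NN.down jx) (NN.down jy)) = x := by
        exact (Category.assoc _ _ _).trans
          ((congrArg (fun g => x' ≫ g) (hpushκ (le_max_left (NN.down jx) (NN.down jy)))).trans hx')
      have hyN : (y' ≫ (chainF hC b).map (homOfLE (le_max_right (NN.down jx) (NN.down jy))))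
          ≫ κ (max (NN.down jx) (NN.down jy)) = y := by
        exact (Category.assoc _ _ _).trans
          ((congrArg (fun g => y' ≫ g) (hpushκ (le_max_right (NN.down jx) (NN.down jy)))).trans hy')
      have hgen : ∀ (w : T ⟶ (chain hC b (max (NN.down jx) (NN.down jy))).1),
          w ≫ (chain hC b (max (NN.down jx) (NN.down jy))).2
            = (w ≫ κ (max (NN.down jx) (NN.down jy))) ≫ mω := by
        intro w
        rw [Category.assoc, hκm]
      have hm : (x' ≫ (chainF hC b).map (homOfLE (le_max_left (NN.down jx) (NN.down jy))))
            ≫ (chain hC b (max (NN.down jx) (NN.down jy))).2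
          = (y' ≫ (chainF hC b).map (homOfLE (le_max_right (NN.down jx) (NN.down jy))))
            ≫ (chain hC b (max (NN.down jx) (NN.down jy))).2 := by
        exact (hgen _).trans ((congrArg (· ≫ mω) hxN).trans
          (hxy.trans ((congrArg (· ≫ mω) hyN).symm.trans (hgen _).symm)))
      rw [← hxN, ← hyN]
      exact hstep _ _ _ hm
    constructor
    intro T x y hxy
    apply fp_test hC
    intro T' hT' g
    apply key T' hT'
    rw [Category.assoc, Category.assoc, hxy]


/-- The target of a strong quotient of a finitely presentable object is finitely generated. -/
lemma fg_of_quotient {B I : C} (e : B ⟶ I) (hBfp : _root_.IsFinitelyPresentable B) (_hepi : Epi e)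
    (llp : ∀ {U V : C} (n : U ⟶ V), Mono n → ∀ (c : B ⟶ U) (h : I ⟶ V),
      e ≫ h = c ≫ n → ∃ d : I ⟶ U, e ≫ d = c ∧ d ≫ n = h) :
    IsFinitelyGenerated I := by
  intro J _ _ E hE cc hcc'
  obtain ⟨hcc⟩ := hcc'
  haveI := hC.1
  refine ⟨Types.FilteredColimit.isColimitOf _ _ ?_ ?_⟩
  · intro h
    have hmap : IsColimit ((coyoneda.obj (op B)).mapCocone cc) := (hBfp J E cc ⟨hcc⟩).some
    obtain ⟨k, c, hc⟩ := Types.jointly_surjective _ hmap (e ≫ h)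
    have hc' : c ≫ cc.ι.app k = e ≫ h := hc
    have hmono : Mono (cc.ι.app k) :=
      ⟨fun {T} x y hxy => leg_cancel hC hE hcc k x y hxy⟩
    obtain ⟨d, hd1, hd2⟩ := llp (cc.ι.app k) hmono c h hc'.symm
    exact ⟨k, d, hd2.symm⟩
  · intro k k' h1 h2 hh
    have hh' : h1 ≫ cc.ι.app k = h2 ≫ cc.ι.app k' := hh
    refine ⟨IsFiltered.max k k', IsFiltered.leftToMax k k', IsFiltered.rightToMax k k', ?_⟩
    show h1 ≫ E.map (IsFiltered.leftToMax k k') = h2 ≫ E.map (IsFiltered.rightToMax k k')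
    apply leg_cancel hC hE hcc (IsFiltered.max k k')
    rw [Category.assoc, Category.assoc, cc.w, cc.w]
    exact hh'

/-- Every finitely generated object in an lfp category is an epi-quotient of a
finitely presentable object. -/
lemma fg_quot {M : C} (hM : IsFinitelyGenerated M) :
    ∃ (B : C) (q : B ⟶ M), _root_.IsFinitelyPresentable B ∧ Epi q := by
  haveI := hC.1
  obtain ⟨J, _, _, D, cc, hfp, ⟨hcl⟩, ⟨iso⟩⟩ := hC.2.2 M
  let lg : ∀ j, D.obj j ⟶ M := fun j => cc.ι.app j ≫ iso.hom
  have hlgw : ∀ {j j' : J} (f : j ⟶ j'), D.map f ≫ lg j' = lg j := by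
    intro j j' f
    show D.map f ≫ cc.ι.app j' ≫ iso.hom = cc.ι.app j ≫ iso.hom
    rw [← Category.assoc, cc.w]
  let ccM : Cocone D := ⟨M, ⟨lg, by
    intro j j' f
    simpa using hlgw f⟩⟩
  have hccM : IsColimit ccM := hcl.ofIsoColimit (Cocones.ext iso (fun j => rfl))
  have himg := fun j => image_fact hC (lg j)
  choose I eI mI fac hepi llp hmono using himg
  have hsq : ∀ {j j' : J} (f : j ⟶ j'), eI j ≫ mI j = (D.map f ≫ eI j') ≫ mI j' := by
    intro j j' f
    rw [fac j, Category.assoc, fac j', hlgw f]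
  let Im : J ⥤ C :=
  { obj := I
    map := fun {j j'} f => (llp j (mI j') (hmono j') (D.map f ≫ eI j') (mI j) (hsq f)).choose
    map_id := by
      intro j
      have hspec := (llp j (mI j) (hmono j) (D.map (𝟙 j) ≫ eI j) (mI j) (hsq (𝟙 j))).choose_spec
      haveI := hmono j
      apply (cancel_mono (mI j)).mp
      rw [hspec.2, Category.id_comp]
    map_comp := by
      intro j j' j'' f g
      haveI := hmono j''
      apply (cancel_mono (mI j'')).mp
      have s1 := (llp j (mI j'') (hmono j'') (D.map (f ≫ g) ≫ eI j'') (mI j)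
        (hsq (f ≫ g))).choose_spec
      have s2 := (llp j (mI j') (hmono j') (D.map f ≫ eI j') (mI j) (hsq f)).choose_spec
      have s3 := (llp j' (mI j'') (hmono j'') (D.map g ≫ eI j'') (mI j') (hsq g)).choose_spec
      rw [s1.2, Category.assoc, s3.2, s2.2] }
  have hImM : ∀ {j j' : J} (f : j ⟶ j'), Im.map f ≫ mI j' = mI j := by
    intro j j' f
    exact (llp j (mI j') (hmono j') (D.map f ≫ eI j') (mI j) (hsq f)).choose_spec.2
  have hImE : ∀ {j j' : J} (f : j ⟶ j'), eI j ≫ Im.map f = D.map f ≫ eI j' := by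
    intro j j' f
    exact (llp j (mI j') (hmono j') (D.map f ≫ eI j') (mI j) (hsq f)).choose_spec.1
  have hMD : MonoDiagram Im := by
    intro j j' f
    haveI : Mono (Im.map f ≫ mI j') := by
      rw [hImM f]
      exact hmono j
    exact mono_of_mono (Im.map f) (mI j')
  let ccI : Cocone Im := ⟨M, ⟨fun j => mI j, by
    intro j j' f
    simpa using hImM f⟩⟩
  let SS : Cocone Im → Cocone D := fun s => ⟨s.pt, ⟨fun j => eI j ≫ s.ι.app j, by
    intro j j' f
    simp only [Functor.const_obj_map, Category.comp_id]
    rw [← Category.assoc, ← hImE f, Category.assoc]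
    have hw : Im.map f ≫ s.ι.app j' = s.ι.app j := s.w f
    rw [hw]
    simp⟩⟩
  have hccI : IsColimit ccI :=
  { desc := fun s => hccM.desc (SS s)
    fac := fun s j => by
      haveI := hepi j
      apply (cancel_epi (eI j)).mp
      have hfac : ccM.ι.app j ≫ hccM.desc (SS s) = eI j ≫ s.ι.app j := hccM.fac (SS s) j
      show eI j ≫ mI j ≫ hccM.desc (SS s) = eI j ≫ s.ι.app j
      rw [← Category.assoc, fac j]
      exact hfac
    uniq := fun s t ht => by
      apply hccM.uniq (SS s) t
      intro j
      have ht' : mI j ≫ t = s.ι.app j := ht j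
      show lg j ≫ t = eI j ≫ s.ι.app j
      rw [← fac j, Category.assoc, ht'] }
  obtain ⟨hFg⟩ := hM J Im hMD ccI ⟨hccI⟩
  obtain ⟨j, s, hs⟩ := Types.jointly_surjective _ hFg (𝟙 M)
  have hs' : s ≫ mI j = 𝟙 M := hs
  haveI := hmono j
  haveI : IsSplitEpi (mI j) := ⟨⟨⟨s, hs'⟩⟩⟩
  haveI : IsIso (mI j) := isIso_of_mono_of_isSplitEpi (mI j)
  refine ⟨D.obj j, eI j ≫ mI j, hfp j, ?_⟩
  haveI := hepi j
  exact epi_comp _ _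

end Stmt10Aux

/-- An lfp category is strictly lfp iff for every morphism `b : B ⟶ A` with `B`
finitely presentable there are `b' : B' ⟶ A` with `B'` finitely presentable and
`f : A ⟶ B'` with `b ≫ f ≫ b' = b` (i.e. `b' ∘ f ∘ b = b`). -/
theorem stmt_10 {C : Type u} [Category.{v} C] (hC : IsLFP C) :
    StrictlyLFP C ↔
      ∀ (B A : C) (b : B ⟶ A), _root_.IsFinitelyPresentable B →
        ∃ (B' : C) (b' : B' ⟶ A) (f : A ⟶ B'),
          _root_.IsFinitelyPresentable B' ∧ b ≫ f ≫ b' = b := by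
  constructor
  · rintro ⟨-, hstrict⟩ B A b hB
    obtain ⟨I, e, mI, fac, hepi, llp, hmono⟩ := Stmt10Aux.image_fact hC b
    have hfg : IsFinitelyGenerated I := Stmt10Aux.fg_of_quotient hC e hB hepi llp
    obtain ⟨u, ⟨Z, vv, ww, hZ, hvw⟩, hmu⟩ := hstrict A I mI hmono hfg
    refine ⟨Z, ww, vv, hZ, ?_⟩
    calc b ≫ vv ≫ ww = b ≫ u := by rw [hvw]
    _ = (e ≫ mI) ≫ u := by rw [fac]
    _ = e ≫ mI := by rw [Category.assoc, hmu]
    _ = b := fac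
  · intro H
    refine ⟨hC, ?_⟩
    intro A M m hm hMfg
    obtain ⟨B, q, hBfp, hq⟩ := Stmt10Aux.fg_quot hC hMfg
    obtain ⟨B', b', f, hB', hfac⟩ := H B A (q ≫ m) hBfp
    refine ⟨f ≫ b', ⟨B', f, b', hB', rfl⟩, ?_⟩
    haveI := hq
    apply (cancel_epi q).mp
    rw [← Category.assoc]
    exact hfac
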